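/- With S and Ĝ as in the immutable reconciliation construction (S = [S₁ S₂; I 0; 0 I], Ĝ built from Ĝ₁ = (Ŝ₁ᵀ W_ν⁻¹ Ŝ₁)⁻¹ Ŝ₁ᵀ W_ν⁻¹), if the base forecast vector ŷ is a random vector with E[ŷ] = Sβ for some β ∈ ℝᵐ, then E[S Ĝ ŷ] = S β; that is, immutable-constrained reconciliation preserves unbiasedness. -/

import Mathlib

open Matrix MeasureTheory

/-- Immutable-constrained reconciliation preserves unbiasedness:
if `E[yh] = S β` then `E[S Ĝ yh] = S β`. -/
theorem stmt3 {p q k : ℕ}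
    (S₁ : Matrix (Fin p) (Fin q) ℝ) (S₂ : Matrix (Fin p) (Fin k) ℝ)
    (Wν : Matrix (Fin p ⊕ Fin q) (Fin p ⊕ Fin q) ℝ) (hWν : Wν.PosDef)
    {Ω : Type*} [MeasureSpace Ω]
    (yh : Ω → ((Fin p ⊕ Fin q) ⊕ Fin k) → ℝ) (β : Fin q ⊕ Fin k → ℝ)
    (hint : ∀ i, Integrable (fun ω => yh ω i)) :
    let S : Matrix ((Fin p ⊕ Fin q) ⊕ Fin k) (Fin q ⊕ Fin k) ℝ :=
      fromBlocks (fromRows S₁ 1) (fromRows S₂ 0) 0 1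
    let Sc₁ : Matrix (Fin p ⊕ Fin q) (Fin q) ℝ := fromRows S₁ 1
    let G₁ : Matrix (Fin q) (Fin p ⊕ Fin q) ℝ :=
      (Sc₁ᵀ * Wν⁻¹ * Sc₁)⁻¹ * Sc₁ᵀ * Wν⁻¹
    let P : Matrix ((Fin p ⊕ Fin q) ⊕ Fin k) ((Fin p ⊕ Fin q) ⊕ Fin k) ℝ :=
      fromBlocks 0 (fromRows S₂ 0) 0 0
    let G : Matrix (Fin q ⊕ Fin k) ((Fin p ⊕ Fin q) ⊕ Fin k) ℝ :=
      fromBlocks G₁ 0 0 1 * (1 - P)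
    (∀ i, (∫ ω, yh ω i) = S.mulVec β i) →
      ∀ i, (∫ ω, (S * G).mulVec (yh ω) i) = S.mulVec β i := by
  intro S Sc₁ G₁ P G hE i
  have hWi : (Wν⁻¹).PosDef := hWν.inv
  -- Sc₁ has injective mulVec
  have hSc_inj : ∀ x : Fin q → ℝ, Sc₁ *ᵥ x = 0 → x = 0 := by
    intro x hx
    funext j
    have := congrFun hx (Sum.inr j)
    simpa [Sc₁, fromRows_mulVec] using this
  -- the Gram matrix is positive definite
  have hM : (Sc₁ᵀ * Wν⁻¹ * Sc₁).PosDef := by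
    refine Matrix.PosDef.of_dotProduct_mulVec_pos ?_ ?_
    · have h := (hWi.posSemidef.conjTranspose_mul_mul_same Sc₁).1
      simpa using h
    · intro x hx
      have h0 : Sc₁ *ᵥ x ≠ 0 := fun h => hx (hSc_inj x h)
      have h := hWi.dotProduct_mulVec_pos h0
      have hrw : star x ⬝ᵥ (Sc₁ᵀ * Wν⁻¹ * Sc₁) *ᵥ x
          = star (Sc₁ *ᵥ x) ⬝ᵥ Wν⁻¹ *ᵥ (Sc₁ *ᵥ x) := by
        simp only [star_trivial, ← Matrix.mulVec_mulVec, Matrix.dotProduct_mulVec,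
          Matrix.vecMul_transpose]
      rw [hrw]; exact h
  have hG₁S : G₁ * Sc₁ = 1 := by
    have : G₁ * Sc₁ = (Sc₁ᵀ * Wν⁻¹ * Sc₁)⁻¹ * (Sc₁ᵀ * Wν⁻¹ * Sc₁) := by
      simp [G₁, Matrix.mul_assoc]
    rw [this, Matrix.nonsing_inv_mul _ (isUnit_iff_ne_zero.mpr hM.det_pos.ne')]
  have hGS : G * S = 1 := by
    show ((fromBlocks G₁ 0 0 1 : Matrix (Fin q ⊕ Fin k) ((Fin p ⊕ Fin q) ⊕ Fin k) ℝ) * (1 - P)) * S = 1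
    have h2 : (1 - P) * S = fromBlocks Sc₁ 0 0 1 := by
      rw [Matrix.sub_mul, Matrix.one_mul]
      have hPS : P * S = fromBlocks 0 (fromRows S₂ 0) 0 0 := by
        simp [P, S, fromBlocks_multiply]
      rw [hPS]
      show fromBlocks Sc₁ (fromRows S₂ 0) 0 1 - fromBlocks 0 (fromRows S₂ 0) 0 0
          = fromBlocks Sc₁ 0 0 1
      ext (i | i) (j | j) <;> simp [fromBlocks]
    refine (Matrix.mul_assoc (fromBlocks G₁ 0 0 1) (1 - P) S).trans ?_; rw [h2]
    simp [fromBlocks_multiply, hG₁S, fromBlocks_one]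
  have key : (S * G) * S = S := by rw [Matrix.mul_assoc, hGS, Matrix.mul_one]
  calc (∫ ω, (S * G).mulVec (yh ω) i)
      = ∑ j, (S * G) i j * ∫ ω, yh ω j := by
        simp only [mulVec, dotProduct]
        rw [integral_finset_sum _ (fun j _ => (hint j).const_mul _)]
        exact Finset.sum_congr rfl fun j _ => integral_const_mul _ _
    _ = ∑ j, (S * G) i j * (S.mulVec β j) := by
        exact Finset.sum_congr rfl fun j _ => by rw [hE]
    _ = ((S * G) *ᵥ (S *ᵥ β)) i := rfl
    _ = S.mulVec β i := by rw [mulVec_mulVec, key]
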